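/- Discrete grid setting. Let p ∈ [1,∞) and ρ : Ω_h → ℝ with Σ_{x∈Ω_h} ρ(x) = 0. Then the feasible set { m : m is a flux satisfying the zero-flux boundary condition and div^h m = ρ on Ω_h } is nonempty, and the function m ↦ Σ_{x∈Ω_h} |m(x)|_p h^d attains its minimum on this set; that is, the discrete optimal transport (Beckmann) problem has a global minimizer. -/
import Mathlib


open Filter Topology

/-- Discrete divergence `div^h m (x) = ∑ i, (mᵢ(x) - mᵢ(x - eᵢ)) / h` on the grid
`{0, …, N}^d`, where the term `mᵢ(x - eᵢ)` is taken to be `0` when `xᵢ = 0`. -/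
noncomputable def gridDiv (d N : ℕ) (h : ℝ)
    (m : (Fin d → Fin (N + 1)) → Fin d → ℝ) (x : Fin d → Fin (N + 1)) : ℝ :=
  (∑ i : Fin d, (m x i -
    if (x i : ℕ) = 0 then 0
    else m (Function.update x i
      ⟨(x i : ℕ) - 1, lt_of_le_of_lt (Nat.sub_le _ _) (x i).isLt⟩) i)) / h

/-- The `ℓ_p` norm `|v|_p = (∑ i, |v i| ^ p) ^ (1/p)` of a vector `v : Fin d → ℝ`. -/
noncomputable def lpNorm (d : ℕ) (p : ℝ) (v : Fin d → ℝ) : ℝ :=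
  (∑ i : Fin d, |v i| ^ p) ^ (1 / p)

open scoped Classical

noncomputable def Tn (d N : ℕ) (ρ : (Fin d → Fin (N + 1)) → ℝ) (k : ℕ)
    (x : Fin d → Fin (N + 1)) : ℝ :=
  ∑ y : Fin d → Fin (N + 1), if ∀ j : Fin d, k ≤ (j : ℕ) → y j = x j then ρ y else 0

noncomputable def Sn (d N : ℕ) (ρ : (Fin d → Fin (N + 1)) → ℝ) (i : Fin d)
    (x : Fin d → Fin (N + 1)) : ℝ :=
  ∑ y : Fin d → Fin (N + 1),
    if (∀ j : Fin d, (i : ℕ) < (j : ℕ) → y j = x j) ∧ (y i : ℕ) ≤ (x i : ℕ) then ρ y else 0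

noncomputable def mflux (d N : ℕ) (h : ℝ) (ρ : (Fin d → Fin (N + 1)) → ℝ)
    (x : Fin d → Fin (N + 1)) (i : Fin d) : ℝ :=
  (h / ((N : ℝ) + 1) ^ (i : ℕ)) *
    (Sn d N ρ i x - (((x i : ℕ) + 1) / ((N : ℝ) + 1)) * Tn d N ρ ((i : ℕ) + 1) x)

lemma Tn_zero (d N : ℕ) (ρ : (Fin d → Fin (N + 1)) → ℝ) (x : Fin d → Fin (N + 1)) :
    Tn d N ρ 0 x = ρ x := by
  unfold Tn
  rw [Finset.sum_congr rfl (fun y _ => ?_), Finset.sum_ite_eq' Finset.univ x ρ]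
  · simp
  · refine if_congr ?_ rfl rfl
    constructor
    · intro hy; funext j; exact hy j (Nat.zero_le _)
    · intro hy j _; rw [hy]

lemma Tn_last (d N : ℕ) (ρ : (Fin d → Fin (N + 1)) → ℝ) (x : Fin d → Fin (N + 1)) :
    Tn d N ρ d x = ∑ y : Fin d → Fin (N + 1), ρ y := by
  unfold Tn
  refine Finset.sum_congr rfl fun y _ => ?_
  rw [if_pos]
  intro j hj
  exact absurd j.isLt (by omega)

lemma Tn_update (d N : ℕ) (ρ : (Fin d → Fin (N + 1)) → ℝ) (k : ℕ) (x : Fin d → Fin (N + 1))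
    (i : Fin d) (a : Fin (N + 1)) (hk : (i : ℕ) < k) :
    Tn d N ρ k (Function.update x i a) = Tn d N ρ k x := by
  unfold Tn
  refine Finset.sum_congr rfl fun y _ => ?_
  refine if_congr (forall_congr' fun j => ?_) rfl rfl
  by_cases hj : j = i
  · subst hj; constructor <;> (intro _ hkj; omega)
  · rw [Function.update_of_ne hj]

lemma Tn_succ_cond (d N : ℕ) (i : Fin d) (x y : Fin d → Fin (N + 1)) :
    (∀ j : Fin d, (i : ℕ) ≤ (j : ℕ) → y j = x j) ↔
      (y i = x i ∧ ∀ j : Fin d, (i : ℕ) < (j : ℕ) → y j = x j) := by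
  constructor
  · intro hy
    exact ⟨hy i le_rfl, fun j hj => hy j hj.le⟩
  · rintro ⟨h1, h2⟩ j hj
    rcases eq_or_lt_of_le hj with hj' | hj'
    · have : j = i := Fin.ext hj'.symm
      subst this; exact h1
    · exact h2 j hj'

lemma Sn_boundary (d N : ℕ) (ρ : (Fin d → Fin (N + 1)) → ℝ) (i : Fin d)
    (x : Fin d → Fin (N + 1)) (hx : (x i : ℕ) = N) :
    Sn d N ρ i x = Tn d N ρ ((i : ℕ) + 1) x := by
  unfold Sn Tn
  refine Finset.sum_congr rfl fun y _ => ?_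
  refine if_congr ?_ rfl rfl
  constructor
  · rintro ⟨h1, _⟩ j hj; exact h1 j (by omega)
  · intro hy
    exact ⟨fun j hj => hy j (by omega), by omega⟩

lemma Sn_zero (d N : ℕ) (ρ : (Fin d → Fin (N + 1)) → ℝ) (i : Fin d)
    (x : Fin d → Fin (N + 1)) (hx : (x i : ℕ) = 0) :
    Sn d N ρ i x = Tn d N ρ (i : ℕ) x := by
  unfold Sn Tn
  refine Finset.sum_congr rfl fun y _ => ?_
  refine if_congr ?_ rfl rfl
  rw [Tn_succ_cond]
  constructor
  · rintro ⟨h1, h2⟩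
    exact ⟨Fin.ext (by omega), h1⟩
  · rintro ⟨h1, h2⟩
    exact ⟨h2, by rw [h1]⟩

lemma sub_ite_ite (r : ℝ) (A : Prop) [Decidable A] (a b : ℕ) (hb : b ≠ 0) :
    (if A ∧ a ≤ b then r else 0) - (if A ∧ a ≤ b - 1 then r else 0) =
      if a = b ∧ A then r else 0 := by
  by_cases hA : A
  · simp only [hA, true_and, and_true]
    split_ifs <;> first | (exfalso; omega) | ring
  · simp [hA]

lemma Sn_diff (d N : ℕ) (ρ : (Fin d → Fin (N + 1)) → ℝ) (i : Fin d)
    (x : Fin d → Fin (N + 1)) (hx : (x i : ℕ) ≠ 0) :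
    Sn d N ρ i x -
      Sn d N ρ i (Function.update x i
        ⟨(x i : ℕ) - 1, lt_of_le_of_lt (Nat.sub_le _ _) (x i).isLt⟩) = Tn d N ρ (i : ℕ) x := by
  unfold Sn Tn
  rw [← Finset.sum_sub_distrib]
  refine Finset.sum_congr rfl fun y _ => ?_
  have hupd : ∀ j : Fin d, (i : ℕ) < (j : ℕ) →
      (Function.update x i ⟨(x i : ℕ) - 1, lt_of_le_of_lt (Nat.sub_le _ _) (x i).isLt⟩) j = x j := by
    intro j hj
    rw [Function.update_of_ne (by intro e; subst e; omega)]
  have hkey : ((∀ j : Fin d, (i : ℕ) < (j : ℕ) →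
      y j = (Function.update x i ⟨(x i : ℕ) - 1, lt_of_le_of_lt (Nat.sub_le _ _) (x i).isLt⟩) j) ∧
      (y i : ℕ) ≤ ((Function.update x i ⟨(x i : ℕ) - 1, lt_of_le_of_lt (Nat.sub_le _ _) (x i).isLt⟩) i : ℕ))
      ↔ ((∀ j : Fin d, (i : ℕ) < (j : ℕ) → y j = x j) ∧ (y i : ℕ) ≤ (x i : ℕ) - 1) := by
    rw [Function.update_self]
    refine and_congr (forall_congr' fun j => ?_) Iff.rfl
    constructor
    · intro hj hij; rw [hj hij, hupd j hij]
    · intro hj hij; rw [hj hij, hupd j hij]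
  rw [if_congr hkey rfl rfl, if_congr (Tn_succ_cond d N i x y) rfl rfl,
    if_congr (and_congr_left' (Fin.ext_iff (a := y i) (b := x i))) rfl rfl]
  exact sub_ite_ite (ρ y) _ _ _ hx

lemma mflux_boundary (d N : ℕ) (h : ℝ) (ρ : (Fin d → Fin (N + 1)) → ℝ)
    (x : Fin d → Fin (N + 1)) (i : Fin d) (hx : (x i : ℕ) = N) :
    mflux d N h ρ x i = 0 := by
  have hN1 : ((N : ℝ) + 1) ≠ 0 := by positivity
  unfold mflux
  rw [Sn_boundary d N ρ i x hx, hx]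
  rw [div_self (by push_cast; linarith), one_mul, sub_self, mul_zero]

lemma mflux_div (d N : ℕ) (h : ℝ) (hh : h ≠ 0) (ρ : (Fin d → Fin (N + 1)) → ℝ)
    (hρ : ∑ y : Fin d → Fin (N + 1), ρ y = 0) (x : Fin d → Fin (N + 1)) :
    gridDiv d N h (mflux d N h ρ) x = ρ x := by
  have hN1 : ((N : ℝ) + 1) ≠ 0 := by positivity
  set f : ℕ → ℝ := fun k => Tn d N ρ k x / ((N : ℝ) + 1) ^ k with hf
  unfold gridDiv
  have hterm : ∀ i : Fin d, (mflux d N h ρ x i -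
      if (x i : ℕ) = 0 then 0
      else mflux d N h ρ (Function.update x i
        ⟨(x i : ℕ) - 1, lt_of_le_of_lt (Nat.sub_le _ _) (x i).isLt⟩) i)
      = h * (f (i : ℕ) - f ((i : ℕ) + 1)) := by
    intro i
    by_cases hx0 : (x i : ℕ) = 0
    · rw [if_pos hx0]
      unfold mflux
      rw [Sn_zero d N ρ i x hx0, hx0]
      simp only [hf]
      rw [pow_succ]
      push_cast
      field_simp
      ring
    · rw [if_neg hx0]
      unfold mflux
      set x' := Function.update x i
        ⟨(x i : ℕ) - 1, lt_of_le_of_lt (Nat.sub_le _ _) (x i).isLt⟩ with hx'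
      have h1 : Sn d N ρ i x = Tn d N ρ (i : ℕ) x + Sn d N ρ i x' := by
        have := Sn_diff d N ρ i x hx0
        rw [← hx'] at this
        linarith
      have h2 : Tn d N ρ ((i : ℕ) + 1) x' = Tn d N ρ ((i : ℕ) + 1) x :=
        Tn_update d N ρ ((i : ℕ) + 1) x i _ (by omega)
      have h3 : ((x' i : ℕ) : ℝ) = ((x i : ℕ) : ℝ) - 1 := by
        rw [hx', Function.update_self]
        have : 1 ≤ (x i : ℕ) := Nat.one_le_iff_ne_zero.mpr hx0
        push_cast [Nat.cast_sub this]
        ring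
      rw [h1, h2, h3]
      simp only [hf]
      rw [pow_succ]
      field_simp
      ring
  rw [Finset.sum_congr rfl (fun i _ => hterm i), ← Finset.mul_sum,
    Fin.sum_univ_eq_sum_range (fun k => f k - f (k + 1)) d,
    Finset.sum_range_sub' f d]
  have hf0 : f 0 = ρ x := by simp [hf, Tn_zero]
  have hfd : f d = 0 := by simp [hf, Tn_last, hρ]
  rw [hf0, hfd, sub_zero]
  field_simp

lemma lpNorm_nonneg (d : ℕ) (p : ℝ) (v : Fin d → ℝ) : 0 ≤ lpNorm d p v :=
  Real.rpow_nonneg (Finset.sum_nonneg fun i _ => Real.rpow_nonneg (abs_nonneg _) p) _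

lemma lpNorm_continuous (d : ℕ) (p : ℝ) (hp : 1 ≤ p) : Continuous (lpNorm d p) := by
  have hsum : Continuous fun v : Fin d → ℝ => ∑ i, |v i| ^ p := by
    apply continuous_finset_sum
    intro i _
    rw [continuous_iff_continuousAt]
    intro v
    exact (continuous_abs.comp (continuous_apply i)).continuousAt.rpow_const
      (Or.inr (by linarith))
  rw [continuous_iff_continuousAt]
  intro v
  exact hsum.continuousAt.rpow_const (Or.inr (by positivity))

lemma norm_le_lpNorm (d : ℕ) (p : ℝ) (hp : 1 ≤ p) (v : Fin d → ℝ) : ‖v‖ ≤ lpNorm d p v := by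
  have hp0 : 0 < p := by linarith
  rw [pi_norm_le_iff_of_nonneg (lpNorm_nonneg d p v)]
  intro i
  have h1 : |v i| = (|v i| ^ p) ^ (1 / p) := by
    rw [one_div, Real.rpow_rpow_inv (abs_nonneg _) hp0.ne']
  rw [Real.norm_eq_abs, h1]
  unfold lpNorm
  refine Real.rpow_le_rpow (Real.rpow_nonneg (abs_nonneg _) _) ?_ (by positivity)
  exact Finset.single_le_sum (fun j _ => Real.rpow_nonneg (abs_nonneg _) p) (Finset.mem_univ i)

theorem discrete_OT_hasMinimizer' (d N : ℕ) (hd : 1 ≤ d) (hN : 1 ≤ N)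
    (h : ℝ) (hh : 0 < h) (p : ℝ) (hp : 1 ≤ p)
    (ρ : (Fin d → Fin (N + 1)) → ℝ) (hρ : ∑ x : Fin d → Fin (N + 1), ρ x = 0) :
    ∃ m : (Fin d → Fin (N + 1)) → Fin d → ℝ,
      (∀ (x : Fin d → Fin (N + 1)) (i : Fin d), (x i : ℕ) = N → m x i = 0) ∧
      (∀ x : Fin d → Fin (N + 1), gridDiv d N h m x = ρ x) ∧
      ∀ m' : (Fin d → Fin (N + 1)) → Fin d → ℝ,
        (∀ (x : Fin d → Fin (N + 1)) (i : Fin d), (x i : ℕ) = N → m' x i = 0) →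
        (∀ x : Fin d → Fin (N + 1), gridDiv d N h m' x = ρ x) →
        ∑ x : Fin d → Fin (N + 1), lpNorm d p (m x) * h ^ d ≤
          ∑ x : Fin d → Fin (N + 1), lpNorm d p (m' x) * h ^ d := by
  classical
  set m₀ := mflux d N h ρ with hm₀
  have hm₀b : ∀ (x : Fin d → Fin (N + 1)) (i : Fin d), (x i : ℕ) = N → m₀ x i = 0 :=
    fun x i hx => mflux_boundary d N h ρ x i hx
  have hm₀d : ∀ x, gridDiv d N h m₀ x = ρ x := mflux_div d N h hh.ne' ρ hρ
  set F : ((Fin d → Fin (N + 1)) → Fin d → ℝ) → ℝ :=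
    fun m => ∑ x : Fin d → Fin (N + 1), lpNorm d p (m x) * h ^ d with hF
  have hhd : (0 : ℝ) < h ^ d := by positivity
  have hFcont : Continuous F := by
    apply continuous_finset_sum
    intro x _
    exact ((lpNorm_continuous d p hp).comp (continuous_apply x)).mul continuous_const
  have hbound : ∀ m, ‖m‖ ≤ F m / h ^ d := by
    intro m
    have hFnn : 0 ≤ F m / h ^ d := by
      apply div_nonneg _ hhd.le
      exact Finset.sum_nonneg fun x _ => mul_nonneg (lpNorm_nonneg d p _) hhd.le
    rw [pi_norm_le_iff_of_nonneg hFnn]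
    intro x
    calc ‖m x‖ ≤ lpNorm d p (m x) := norm_le_lpNorm d p hp (m x)
      _ ≤ F m / h ^ d := by
          rw [le_div_iff₀ hhd]
          exact Finset.single_le_sum
            (fun y _ => mul_nonneg (lpNorm_nonneg d p _) hhd.le) (Finset.mem_univ x)
  set S : Set ((Fin d → Fin (N + 1)) → Fin d → ℝ) :=
    {m | (∀ (x : Fin d → Fin (N + 1)) (i : Fin d), (x i : ℕ) = N → m x i = 0) ∧
      ∀ x, gridDiv d N h m x = ρ x} with hS
  have hScl : IsClosed S := by
    have hA : IsClosed {m : (Fin d → Fin (N + 1)) → Fin d → ℝ |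
        ∀ (x : Fin d → Fin (N + 1)) (i : Fin d), (x i : ℕ) = N → m x i = 0} := by
      have heq : {m : (Fin d → Fin (N + 1)) → Fin d → ℝ |
          ∀ (x : Fin d → Fin (N + 1)) (i : Fin d), (x i : ℕ) = N → m x i = 0} =
          ⋂ (x : Fin d → Fin (N + 1)), ⋂ (i : Fin d), ⋂ (_ : (x i : ℕ) = N),
            {m | m x i = 0} := by
        ext m; simp [Set.mem_iInter]
      rw [heq]
      exact isClosed_iInter fun x => isClosed_iInter fun i => isClosed_iInter fun _ =>
        isClosed_eq ((continuous_apply i).comp (continuous_apply x)) continuous_const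
    have hB : IsClosed {m : (Fin d → Fin (N + 1)) → Fin d → ℝ |
        ∀ x, gridDiv d N h m x = ρ x} := by
      have heq : {m : (Fin d → Fin (N + 1)) → Fin d → ℝ | ∀ x, gridDiv d N h m x = ρ x} =
          ⋂ (x : Fin d → Fin (N + 1)), {m | gridDiv d N h m x = ρ x} := by
        ext m; simp [Set.mem_iInter]
      rw [heq]
      refine isClosed_iInter fun x => isClosed_eq ?_ continuous_const
      unfold gridDiv
      apply Continuous.div_const
      apply continuous_finset_sum
      intro i _
      refine Continuous.sub ((continuous_apply i).comp (continuous_apply x)) ?_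
      by_cases hc : (x i : ℕ) = 0
      · simp only [if_pos hc]; exact continuous_const
      · simp only [if_neg hc]; exact (continuous_apply i).comp (continuous_apply _)
    exact hA.inter hB
  set K := S ∩ {m | F m ≤ F m₀} with hK
  have hKcl : IsClosed K := hScl.inter (isClosed_le hFcont continuous_const)
  have hKsub : K ⊆ Metric.closedBall 0 (F m₀ / h ^ d) := by
    intro m hm
    rw [Metric.mem_closedBall, dist_zero_right]
    refine (hbound m).trans ?_
    gcongr
    exact hm.2
  have hKcomp : IsCompact K :=
    (isCompact_closedBall 0 _).of_isClosed_subset hKcl hKsub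
  have hKne : K.Nonempty := ⟨m₀, ⟨hm₀b, hm₀d⟩, by simp⟩
  obtain ⟨m, hmK, hmin⟩ := hKcomp.exists_isMinOn hKne hFcont.continuousOn
  refine ⟨m, hmK.1.1, hmK.1.2, ?_⟩
  intro m' hb' hd'
  by_cases hle : F m' ≤ F m₀
  · exact hmin ⟨⟨hb', hd'⟩, hle⟩
  · have h1 : F m ≤ F m₀ := hmK.2
    have h2 : F m₀ ≤ F m' := le_of_not_ge hle
    exact le_trans h1 h2

/-- The discrete optimal transport (Beckmann) problem
`min Σ_x |m(x)|_p h^d` over fluxes `m` satisfying the zero-flux boundary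
condition and `div^h m = ρ`, has a global minimizer (in particular, the
feasible set is nonempty). -/
theorem discrete_OT_hasMinimizer (d N : ℕ) (hd : 1 ≤ d) (hN : 1 ≤ N)
    (h : ℝ) (hh : 0 < h) (p : ℝ) (hp : 1 ≤ p)
    (ρ : (Fin d → Fin (N + 1)) → ℝ) (hρ : ∑ x : Fin d → Fin (N + 1), ρ x = 0) :
    ∃ m : (Fin d → Fin (N + 1)) → Fin d → ℝ,
      (∀ (x : Fin d → Fin (N + 1)) (i : Fin d), (x i : ℕ) = N → m x i = 0) ∧
      (∀ x : Fin d → Fin (N + 1), gridDiv d N h m x = ρ x) ∧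
      ∀ m' : (Fin d → Fin (N + 1)) → Fin d → ℝ,
        (∀ (x : Fin d → Fin (N + 1)) (i : Fin d), (x i : ℕ) = N → m' x i = 0) →
        (∀ x : Fin d → Fin (N + 1), gridDiv d N h m' x = ρ x) →
        ∑ x : Fin d → Fin (N + 1), lpNorm d p (m x) * h ^ d ≤
          ∑ x : Fin d → Fin (N + 1), lpNorm d p (m' x) * h ^ d := by
  exact discrete_OT_hasMinimizer' d N hd hN h hh p hp ρ hρ
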